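/- Under the degenerate series condition, the communication cost from the highest metastable state x₂ to each degenerate metastable state x₁ʳ equals Γ_m, that is, Φ(x₂, x₁ʳ) - H(x₂) = Γ_m for all r = 1,...,n. -/
import Mathlib

open Filter Topology
open scoped Classical

/-- Height along a path starting at `x` with subsequent states `l`. -/
def pathHeight {S : Type*} (H : S → ℝ) (Δ : S → S → ℝ) : S → List S → ℝ
  | x, [] => H x
  | x, y :: l => max (H x + Δ x y) (pathHeight H Δ y l)

/-- Communication height between two states. -/
noncomputable def commHeight {S : Type*} (H : S → ℝ) (Δ : S → S → ℝ) (x y : S) : ℝ :=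
  sInf {c | ∃ l : List S,
    (x :: l).getLast (List.cons_ne_nil x l) = y ∧ c = pathHeight H Δ x l}


/-- Communication height between a state and a set. -/
noncomputable def commSet {S : Type*} (H : S → ℝ) (Δ : S → S → ℝ) (x : S) (A : Set S) : ℝ :=
  sInf (commHeight H Δ x '' A)

/-- The states with energy strictly below that of `x`. -/
def Ibelow {S : Type*} (H : S → ℝ) (x : S) : Set S := {y | H y < H x}

/-- Stability level of a state. -/
noncomputable def stabLevel {S : Type*} (H : S → ℝ) (Δ : S → S → ℝ) (x : S) : ℝ :=
  commSet H Δ x (Ibelow H x) - H x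

/-- Ground states: global minima of the energy. -/
def stableSet {S : Type*} (H : S → ℝ) : Set S := {x | ∀ y, H x ≤ H y}

/-- Maximal stability level among non-stable states. -/
noncomputable def gammaM {S : Type*} (H : S → ℝ) (Δ : S → S → ℝ) : ℝ :=
  sSup (stabLevel H Δ '' (stableSet H)ᶜ)

/-- Metastable states: non-stable states attaining the maximal stability level. -/
def metaSet {S : Type*} (H : S → ℝ) (Δ : S → S → ℝ) : Set S :=
  {x | x ∉ stableSet H ∧ stabLevel H Δ x = gammaM H Δ}

/-- last element of chain x :: l -/
def lastS {S : Type*} : S → List S → S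
  | x, [] => x
  | _, y :: l => lastS y l

section aux
variable {S : Type*} (H : S → ℝ) (Δ : S → S → ℝ)

lemma lastS_eq_getLast : ∀ (l : List S) (x : S),
    (x :: l).getLast (List.cons_ne_nil x l) = lastS x l
  | [], x => rfl
  | y :: l, x => by
    rw [List.getLast_cons (List.cons_ne_nil y l)]
    exact lastS_eq_getLast l y

lemma lastS_append : ∀ (l₁ : List S) (x : S) (l₂ : List S),
    lastS x (l₁ ++ l₂) = lastS (lastS x l₁) l₂
  | [], x, l₂ => rfl
  | y :: l₁, x, l₂ => lastS_append l₁ y l₂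

variable (hΔ : ∀ x y, 0 ≤ Δ x y) (hrev : ∀ x y, H x + Δ x y = H y + Δ y x)
include hΔ

lemma le_pathHeight : ∀ (l : List S) (x : S), H x ≤ pathHeight H Δ x l
  | [], x => le_refl _
  | y :: l, x => le_max_of_le_left (le_add_of_nonneg_right (hΔ x y))

lemma pathHeight_append : ∀ (l₁ : List S) (x : S) (l₂ : List S),
    pathHeight H Δ x (l₁ ++ l₂) =
      max (pathHeight H Δ x l₁) (pathHeight H Δ (lastS x l₁) l₂)
  | [], x, l₂ => by
    simp [pathHeight, lastS, max_eq_right (le_pathHeight H Δ hΔ l₂ x)]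
  | y :: l₁, x, l₂ => by
    simp only [List.cons_append, pathHeight, lastS, List.append_eq,
      pathHeight_append l₁ y l₂, max_assoc]


lemma commHeight_mem_nonempty (x y : S) :
    {c | ∃ l : List S, (x :: l).getLast (List.cons_ne_nil x l) = y ∧
      c = pathHeight H Δ x l}.Nonempty :=
  ⟨pathHeight H Δ x [y], [y], by simp [lastS_eq_getLast, lastS], rfl⟩



lemma commHeight_bddBelow (x y : S) :
    BddBelow {c | ∃ l : List S, (x :: l).getLast (List.cons_ne_nil x l) = y ∧
      c = pathHeight H Δ x l} := by
  refine ⟨H x, fun c hc => ?_⟩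
  obtain ⟨l, -, rfl⟩ := hc
  exact le_pathHeight H Δ hΔ l x



lemma le_commHeight (x y : S) : H x ≤ commHeight H Δ x y := by
  refine le_csInf (commHeight_mem_nonempty H Δ hΔ x y) fun c hc => ?_
  obtain ⟨l, -, rfl⟩ := hc
  exact le_pathHeight H Δ hΔ l x


include hrev

lemma pathHeight_reverse : ∀ (l : List S) (x : S),
    pathHeight H Δ (lastS x l) ((x :: l).reverse.tail) = pathHeight H Δ x l ∧
    lastS (lastS x l) ((x :: l).reverse.tail) = x
  | [], x => ⟨rfl, rfl⟩
  | y :: l, x => by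
    obtain ⟨ih1, ih2⟩ := pathHeight_reverse l y
    have hrevne : (y :: l).reverse ≠ [] := by simp
    have htail : (x :: y :: l).reverse.tail = (y :: l).reverse.tail ++ [x] := by
      rw [List.reverse_cons]
      obtain ⟨a, t, h⟩ := List.exists_cons_of_ne_nil hrevne
      rw [h]; rfl
    have hlast : lastS (y : S) (l : List S) = lastS x (y :: l) := rfl
    constructor
    · rw [htail, ← hlast, pathHeight_append H Δ hΔ, ih1, ih2]
      show _ = max (H x + Δ x y) (pathHeight H Δ y l)
      have : pathHeight H Δ y [x] = H x + Δ x y := by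
        show max (H y + Δ y x) (H x) = _
        rw [← hrev x y]
        exact max_eq_left (le_add_of_nonneg_right (hΔ x y))
      rw [this, max_comm]
    · rw [htail, ← hlast, lastS_append, ih2]; rfl

lemma commHeight_symm_le (x y : S) : commHeight H Δ x y ≤ commHeight H Δ y x := by
  refine le_csInf (commHeight_mem_nonempty H Δ hΔ y x) fun c hc => ?_
  obtain ⟨l, hl, rfl⟩ := hc
  rw [lastS_eq_getLast] at hl
  obtain ⟨h1, h2⟩ := pathHeight_reverse H Δ hΔ hrev l y
  rw [hl] at h1 h2
  refine csInf_le (commHeight_bddBelow H Δ hΔ x y) ⟨(y :: l).reverse.tail, ?_, h1.symm⟩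
  rw [lastS_eq_getLast]; exact h2

lemma commHeight_symm (x y : S) : commHeight H Δ x y = commHeight H Δ y x :=
  le_antisymm (commHeight_symm_le H Δ hΔ hrev x y) (commHeight_symm_le H Δ hΔ hrev y x)

lemma commHeight_triangle (x y z : S) :
    commHeight H Δ x z ≤ max (commHeight H Δ x y) (commHeight H Δ y z) := by
  refine le_of_forall_pos_le_add fun ε hε => ?_
  obtain ⟨a, ⟨l₁, hl₁, rfl⟩, ha⟩ := exists_lt_of_csInf_lt
    (commHeight_mem_nonempty H Δ hΔ x y)
    (lt_add_of_pos_right (commHeight H Δ x y) hε)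
  obtain ⟨b, ⟨l₂, hl₂, rfl⟩, hb⟩ := exists_lt_of_csInf_lt
    (commHeight_mem_nonempty H Δ hΔ y z)
    (lt_add_of_pos_right (commHeight H Δ y z) hε)
  rw [lastS_eq_getLast] at hl₁ hl₂
  have hcat : lastS x (l₁ ++ l₂) = z := by rw [lastS_append, hl₁, hl₂]
  have hle : commHeight H Δ x z ≤ pathHeight H Δ x (l₁ ++ l₂) := by
    refine csInf_le (commHeight_bddBelow H Δ hΔ x z) ⟨l₁ ++ l₂, ?_, rfl⟩
    rw [lastS_eq_getLast, hcat]
  rw [pathHeight_append H Δ hΔ, hl₁] at hle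
  calc commHeight H Δ x z ≤ max (pathHeight H Δ x l₁) (pathHeight H Δ y l₂) := hle
    _ ≤ max (commHeight H Δ x y + ε) (commHeight H Δ y z + ε) :=
        max_le_max ha.le hb.le
    _ = max (commHeight H Δ x y) (commHeight H Δ y z) + ε := max_add_add_right _ _ _

end aux

/-- Under the degenerate series condition, the communication cost from `x₂` to each
degenerate metastable state `x₁ r` equals `Γ_m`. -/
theorem comm_cost_x2_to_x1_eq_gammaM {S : Type*} [Fintype S]
    (H : S → ℝ) (Δ : S → S → ℝ)
    (hΔ : ∀ x y, 0 ≤ Δ x y) (hrev : ∀ x y, H x + Δ x y = H y + Δ y x)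
    (n : ℕ) (hn : 1 ≤ n) (x₀ x₂ : S) (x₁ : Fin n → S)
    (hinj : Function.Injective x₁)
    (hS : stableSet H = {x₀})
    (hM : metaSet H Δ = insert x₂ (Set.range x₁))
    (hE2 : ∀ r, H (x₁ r) < H x₂)
    (hEq : ∀ r q, H (x₁ r) = H (x₁ q))
    (hBar : ∀ r q, commHeight H Δ (x₁ r) (x₁ q) - H (x₁ r) < gammaM H Δ)
    (hK2 : commHeight H Δ x₂ x₀ - H x₂ = gammaM H Δ)
    (hK1 : ∀ r, commHeight H Δ (x₁ r) x₀ - H (x₁ r) = gammaM H Δ) :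
    ∀ r, commHeight H Δ x₂ (x₁ r) - H x₂ = gammaM H Δ := by
  intro r
  have hmem : x₂ ∈ metaSet H Δ := by rw [hM]; exact Set.mem_insert _ _
  have hstab : stabLevel H Δ x₂ = gammaM H Δ := hmem.2
  -- lower bound: x₁ r lies strictly below x₂, so its communication cost is at least Γ_m
  have hbs : BddBelow (commHeight H Δ x₂ '' Ibelow H x₂) := by
    refine ⟨H x₂, ?_⟩
    rintro c ⟨y, -, rfl⟩
    exact le_commHeight H Δ hΔ x₂ y
  have hlow : commSet H Δ x₂ (Ibelow H x₂) ≤ commHeight H Δ x₂ (x₁ r) :=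
    csInf_le hbs ⟨x₁ r, hE2 r, rfl⟩
  have h1 : gammaM H Δ ≤ commHeight H Δ x₂ (x₁ r) - H x₂ := by
    have hst : commSet H Δ x₂ (Ibelow H x₂) - H x₂ = gammaM H Δ := hstab
    linarith
  -- upper bound: go through x₀
  have t := commHeight_triangle H Δ hΔ hrev x₂ x₀ (x₁ r)
  rw [commHeight_symm H Δ hΔ hrev x₀ (x₁ r)] at t
  have hk1 := hK1 r
  have he2 := hE2 r
  have h2 : commHeight H Δ x₂ (x₁ r) ≤ H x₂ + gammaM H Δ := by
    have hmax : max (commHeight H Δ x₂ x₀) (commHeight H Δ (x₁ r) x₀) ≤ H x₂ + gammaM H Δ :=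
      max_le (by linarith) (by linarith)
    linarith
  linarith
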